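/- Consider the generalized top-k selective gossiping trajectory with m ≥ 2 agents, n ≥ 1 candidates, and k ∈ [n], assume the connectivity graph G = ([m], E) is connected, and let X(∞) = lim_{t→∞} X(t) denote the (existing) entrywise limit. Fix {i₁,i₂} ∈ E and let α_{i₁i₂} = min_{j ∈ S^∞_{i₁i₂}} X_{i₁j}(∞). Then for any candidate j ∉ S^∞_{i₁i₂} and any agent i ∈ [m], X_{ij}(∞) ≤ α_{i₁i₂}; that is, eventually the opinion of every agent on any candidate not discussed infinitely often by i₁ and i₂ is at most α_{i₁i₂}. -/

import Mathlib

open Filter Topology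

/-- The set of indices of the top-k entries of v: indices j for which fewer
than k entries of v are strictly greater than v j. -/
def topSet {n : ℕ} (k : ℕ) (v : Fin n → ℝ) : Set (Fin n) :=
  {j | Set.ncard {l | v j < v l} < k}

lemma lt_of_not_mem_topSet {n k : ℕ} {v : Fin n → ℝ} {j l : Fin n}
    (hj : j ∉ topSet k v) (hl : l ∈ topSet k v) : v j < v l := by
  by_contra h
  push_neg at h
  apply hj
  have hsub : {x | v j < v x} ⊆ {x | v l < v x} := fun x hx => lt_of_le_of_lt h hx
  exact lt_of_le_of_lt (Set.ncard_le_ncard hsub (Set.toFinite _)) hl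

lemma topSet_card {n k : ℕ} (hkn : k ≤ n) (v : Fin n → ℝ) :
    k ≤ (topSet k v).ncard := by
  set σ := Tuple.sort v with hσ
  have hmono : Monotone (v ∘ σ) := Tuple.monotone_sort v
  set f : Fin k → Fin n := fun i => σ ⟨n - k + i.val, by omega⟩ with hf
  have hinj : Function.Injective f := by
    intro i i' h
    have := σ.injective h
    have : n - k + i.val = n - k + i'.val := congrArg Fin.val this
    exact Fin.ext (by omega)
  have hrange : Set.range f ⊆ topSet k v := by
    rintro _ ⟨i, rfl⟩
    set r : Fin n := ⟨n - k + i.val, by omega⟩ with hr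
    show Set.ncard {x | v (f i) < v x} < k
    have hsub : {x | v (f i) < v x} ⊆ σ '' (Set.Ioi r) := by
      intro x hx
      refine ⟨σ.symm x, ?_, by simp⟩
      by_contra hle
      simp only [Set.mem_Ioi, not_lt] at hle
      have := hmono hle
      simp only [Function.comp_apply, Equiv.apply_symm_apply] at this
      exact absurd hx (not_lt.mpr (le_trans this (le_of_eq rfl)))
    have h1 : Set.ncard (σ '' (Set.Ioi r)) = Set.ncard (Set.Ioi r) :=
      Set.ncard_image_of_injective _ σ.injective
    have h2 : Set.ncard (Set.Ioi r) = n - 1 - r.val := by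
      rw [← Finset.coe_Ioi, Set.ncard_coe_finset, Fin.card_Ioi]
    have h3 := Set.ncard_le_ncard hsub (Set.toFinite _)
    have hi := i.isLt
    have hrval : r.val = n - k + i.val := rfl
    rw [h1, h2, hrval] at h3
    omega
  calc k = Set.ncard (Set.range f) := by
        rw [← Set.image_univ, Set.ncard_image_of_injective _ hinj, Set.ncard_univ,
          Nat.card_eq_fintype_card, Fintype.card_fin]
    _ ≤ (topSet k v).ncard := Set.ncard_le_ncard hrange (Set.toFinite _)

lemma freq_le {f g : ℕ → ℝ} {F G : ℝ}
    (hf : Tendsto f atTop (𝓝 F)) (hg : Tendsto g atTop (𝓝 G))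
    (h : ∃ᶠ t in atTop, f t ≤ g t) : F ≤ G := by
  by_contra hlt
  push_neg at hlt
  have hev := hg.eventually_lt hf hlt
  obtain ⟨t, h1, h2⟩ := (h.and_eventually hev).exists
  exact absurd h1 (not_le.mpr h2)

lemma freq_eq {f g : ℕ → ℝ} {F G : ℝ}
    (hf : Tendsto f atTop (𝓝 F)) (hg : Tendsto g atTop (𝓝 G))
    (h : ∃ᶠ t in atTop, f t = g t) : F = G :=
  le_antisymm (freq_le hf hg (h.mono fun _ ht => le_of_eq ht))
    (freq_le hg hf (h.mono fun _ ht => ge_of_eq ht))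

lemma pigeon {β : Type*} [Finite β] {s : Set ℕ} (hs : s.Infinite) (g : ℕ → β) :
    ∃ b, {t | t ∈ s ∧ g t = b}.Infinite := by
  by_contra h
  push_neg at h
  have : s ⊆ ⋃ b, {t | t ∈ s ∧ g t = b} := fun t ht => Set.mem_iUnion.mpr ⟨g t, ht, rfl⟩
  exact hs (Set.Finite.subset (Set.finite_iUnion h) this)

lemma kth_unique {n k : ℕ} {w : Fin n → ℝ} {r r' : ℝ}
    (h1 : Set.ncard {x | r < w x} < k ∧ k ≤ Set.ncard {x | r ≤ w x})
    (h2 : Set.ncard {x | r' < w x} < k ∧ k ≤ Set.ncard {x | r' ≤ w x}) : r = r' := by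
  obtain ⟨h11, h12⟩ := h1
  obtain ⟨h21, h22⟩ := h2
  rcases lt_trichotomy r r' with h | h | h
  · exfalso
    have hsub : {x | r' ≤ w x} ⊆ {x | r < w x} := fun x hx => lt_of_lt_of_le h hx
    have := Set.ncard_le_ncard hsub (Set.toFinite _)
    omega
  · exact h
  · exfalso
    have hsub : {x | r ≤ w x} ⊆ {x | r' < w x} := fun x hx => lt_of_lt_of_le h hx
    have := Set.ncard_le_ncard hsub (Set.toFinite _)
    omega

lemma edge_facts {m n : ℕ} (k : ℕ) (hk : 1 ≤ k) (hkn : k ≤ n)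
    (p q : ℕ → Fin m)
    (X : ℕ → Fin m → Fin n → ℝ) (S : ℕ → Set (Fin n))
    (hS : ∀ t, S t = topSet k (X t (p t)) ∪ topSet k (X t (q t)))
    (hX1 : ∀ t (i : Fin m) (j : Fin n), (i = p t ∨ i = q t) → j ∈ S t →
      X (t + 1) i j = (X t (p t) j + X t (q t) j) / 2)
    (Xinf : Fin m → Fin n → ℝ)
    (hlim : ∀ (i : Fin m) (j : Fin n), Tendsto (fun t => X t i j) atTop (𝓝 (Xinf i j)))
    (a b : Fin m)
    (hE : {t : ℕ | (p t = a ∧ q t = b) ∨ (p t = b ∧ q t = a)}.Infinite)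
    (SS : Set (Fin n))
    (hSS : SS = {j : Fin n | {t : ℕ | ((p t = a ∧ q t = b) ∨ (p t = b ∧ q t = a)) ∧
      j ∈ S t}.Infinite})
    (γ : ℝ) (hγ : γ = sInf ((fun j => Xinf a j) '' SS)) :
    (∀ x ∈ SS, Xinf a x = Xinf b x) ∧
    (∀ j ∉ SS, Xinf a j ≤ γ ∧ Xinf b j ≤ γ) ∧
    ((Set.ncard {x | γ < Xinf a x} < k ∧ k ≤ Set.ncard {x | γ ≤ Xinf a x}) ∧
     (Set.ncard {x | γ < Xinf b x} < k ∧ k ≤ Set.ncard {x | γ ≤ Xinf b x})) := by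
  classical
  set ET : Set ℕ := {t | (p t = a ∧ q t = b) ∨ (p t = b ∧ q t = a)} with hET
  have hmem : ∀ t ∈ ET, (a = p t ∨ a = q t) ∧ (b = p t ∨ b = q t) ∧
      S t = topSet k (X t a) ∪ topSet k (X t b) := by
    rintro t (⟨h1, h2⟩ | ⟨h1, h2⟩)
    · exact ⟨Or.inl h1.symm, Or.inr h2.symm, by rw [hS t, h1, h2]⟩
    · exact ⟨Or.inr h2.symm, Or.inl h1.symm, by rw [hS t, h1, h2, Set.union_comm]⟩
  -- F2: consensus on SS
  have heq : ∀ x ∈ SS, Xinf a x = Xinf b x := by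
    intro x hx
    rw [hSS] at hx
    have hx' : {t : ℕ | t ∈ ET ∧ x ∈ S t}.Infinite := hx
    have h1 : ((fun t => t + 1) '' {t : ℕ | t ∈ ET ∧ x ∈ S t}) ⊆
        {s : ℕ | X s a x = X s b x} := by
      rintro s ⟨t, ⟨ht, hxt⟩, rfl⟩
      obtain ⟨ha, hb, -⟩ := hmem t ht
      show X (t+1) a x = X (t+1) b x
      rw [hX1 t a x ha hxt, hX1 t b x hb hxt]
    have h2 : {s : ℕ | X s a x = X s b x}.Infinite :=
      (hx'.image (fun u _ v _ huv => by omega)).mono h1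
    exact freq_eq (hlim a x) (hlim b x) (Nat.frequently_atTop_iff_infinite.mpr h2)
  -- F3: eventually S t ⊆ SS at edge times
  obtain ⟨T, hT⟩ : ∃ T : ℕ, ∀ t, T ≤ t → t ∈ ET → S t ⊆ SS := by
    have hDfin : ∀ j : Fin n, ({t | t ∈ ET ∧ j ∈ S t ∧ j ∉ SS} : Set ℕ).Finite := by
      intro j
      by_cases hj : j ∈ SS
      · exact Set.Finite.subset (Set.finite_empty)
          (by rintro t ⟨-, -, hjj⟩; exact absurd hj hjj)
      · have hni : ¬ {t : ℕ | t ∈ ET ∧ j ∈ S t}.Infinite := by rw [hSS] at hj; exact hj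
        rw [Set.not_infinite] at hni
        exact hni.subset (by rintro t ⟨hh1, hh2, -⟩; exact ⟨hh1, hh2⟩)
    have hBad : ({t | t ∈ ET ∧ ¬ S t ⊆ SS} : Set ℕ).Finite := by
      refine Set.Finite.subset (Set.finite_iUnion hDfin) ?_
      rintro t ⟨ht, hns⟩
      rw [Set.not_subset] at hns
      obtain ⟨j, hj1, hj2⟩ := hns
      exact Set.mem_iUnion.mpr ⟨j, ht, hj1, hj2⟩
    obtain ⟨T, hTub⟩ := hBad.bddAbove
    refine ⟨T + 1, fun t ht hmemET => ?_⟩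
    by_contra hns
    have := hTub (⟨hmemET, hns⟩ : t ∈ {t | t ∈ ET ∧ ¬ S t ⊆ SS})
    omega
  -- S t nonempty
  have hSne : ∀ t, (S t).Nonempty := by
    intro t
    have h1 : k ≤ (topSet k (X t (p t))).ncard := topSet_card hkn _
    have h2 : (topSet k (X t (p t))).Nonempty :=
      (Set.ncard_pos (Set.toFinite _)).mp (by omega)
    exact Set.Nonempty.mono (by rw [hS t]; exact Set.subset_union_left) h2
  -- SS nonempty, γ attained
  have hSSne : SS.Nonempty := by
    obtain ⟨x, hx⟩ := pigeon hE (fun t => (hSne t).some)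
    refine ⟨x, ?_⟩
    rw [hSS]
    refine hx.mono ?_
    rintro t ⟨ht, hgt⟩
    exact ⟨ht, hgt ▸ (hSne t).some_mem⟩
  have hSSfin : SS.Finite := Set.toFinite _
  have hmemInf : γ ∈ (fun j => Xinf a j) '' SS := by
    rw [hγ]; exact Set.Nonempty.csInf_mem (hSSne.image _) (hSSfin.image _)
  obtain ⟨lstar, hlstarSS, hlstarval⟩ := hmemInf
  have hγle : ∀ x ∈ SS, γ ≤ Xinf a x := by
    intro x hx
    rw [hγ]
    exact csInf_le ((hSSfin.image _).bddBelow) ⟨x, hx, rfl⟩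
  -- F5: lstar in topSet of some endpoint infinitely often
  obtain ⟨c, hc, hcinf⟩ : ∃ c : Fin m, (c = a ∨ c = b) ∧
      {t | t ∈ ET ∧ T ≤ t ∧ lstar ∈ topSet k (X t c)}.Infinite := by
    have hs : {t | t ∈ ET ∧ lstar ∈ S t ∧ T ≤ t}.Infinite := by
      have h0 : {t : ℕ | t ∈ ET ∧ lstar ∈ S t}.Infinite := by
        rw [hSS] at hlstarSS; exact hlstarSS
      refine (h0.diff (Set.finite_Iio T)).mono ?_
      rintro t ⟨⟨h1, h2⟩, h3⟩
      exact ⟨h1, h2, not_lt.mp (by simpa using h3)⟩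
    by_cases hca : {t | t ∈ ET ∧ T ≤ t ∧ lstar ∈ topSet k (X t a)}.Infinite
    · exact ⟨a, Or.inl rfl, hca⟩
    · refine ⟨b, Or.inr rfl, ?_⟩
      rw [Set.not_infinite] at hca
      refine (hs.diff hca).mono ?_
      rintro t ⟨⟨h1, h2, h3⟩, h4⟩
      refine ⟨h1, h3, ?_⟩
      obtain ⟨-, -, hSt⟩ := hmem t h1
      rw [hSt] at h2
      rcases h2 with h2 | h2
      · exact absurd (⟨h1, h3, h2⟩ : t ∈ {t | t ∈ ET ∧ T ≤ t ∧ lstar ∈ topSet k (X t a)}) h4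
      · exact h2
  have hcSS : ∀ x ∈ SS, Xinf c x = Xinf a x := by
    intro x hx
    rcases hc with rfl | rfl
    · rfl
    · exact (heq x hx).symm
  have hclstar : Xinf c lstar = γ := by rw [hcSS lstar hlstarSS]; exact hlstarval
  -- F6: fewer than k candidates above γ at c
  have hcount : Set.ncard {x | γ < Xinf c x} < k := by
    by_contra hge
    push_neg at hge
    have hev : ∀ᶠ t in atTop, ∀ x ∈ {x | γ < Xinf c x}, X t c lstar < X t c x := by
      rw [eventually_all_finite (Set.toFinite _)]
      intro x hx
      exact Filter.Tendsto.eventually_lt (hclstar ▸ hlim c lstar) (hlim c x) hx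
    have hfreq : ∃ᶠ t in atTop, t ∈ {t | t ∈ ET ∧ T ≤ t ∧ lstar ∈ topSet k (X t c)} :=
      Nat.frequently_atTop_iff_infinite.mpr hcinf
    obtain ⟨t, ⟨-, -, htop⟩, hall⟩ := (hfreq.and_eventually hev).exists
    have hsub : {x | γ < Xinf c x} ⊆ {x | X t c lstar < X t c x} := fun x hx => hall x hx
    have h1 := Set.ncard_le_ncard hsub (Set.toFinite _)
    simp only [topSet, Set.mem_setOf_eq] at htop
    omega
  -- F7: candidates outside SS are ≤ γ at both endpoints
  have hle : ∀ j, j ∉ SS → ∀ d : Fin m, (d = a ∨ d = b) → Xinf d j ≤ γ := by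
    intro j hj d hd
    by_contra hgt
    push_neg at hgt
    have hs : {t | t ∈ ET ∧ T ≤ t}.Infinite := by
      refine (hE.diff (Set.finite_Iio T)).mono ?_
      rintro t ⟨h1, h2⟩
      exact ⟨h1, not_lt.mp (by simpa using h2)⟩
    obtain ⟨L, hL⟩ := pigeon hs (fun t => topSet k (X t d))
    obtain ⟨t₀, ⟨ht₀ET, ht₀T⟩, ht₀L⟩ := hL.nonempty
    have hdmem : ∀ t ∈ ET, d = p t ∨ d = q t := by
      intro t ht
      obtain ⟨h1, h2, -⟩ := hmem t ht
      rcases hd with rfl | rfl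
      exacts [h1, h2]
    have htopsub : ∀ t ∈ ET, topSet k (X t d) ⊆ S t := by
      intro t ht
      rw [hS t]
      rcases hdmem t ht with h | h
      · rw [← h]; exact Set.subset_union_left
      · rw [← h]; exact Set.subset_union_right
    have hLSS : L ⊆ SS := by
      rw [← ht₀L]
      exact (htopsub t₀ ht₀ET).trans (hT t₀ ht₀T ht₀ET)
    have hLcard : k ≤ L.ncard := by rw [← ht₀L]; exact topSet_card hkn _
    have hxle : ∀ x ∈ L, γ < Xinf d x := by
      intro x hx
      have hfr : ∃ᶠ t in atTop, X t d j ≤ X t d x := by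
        apply Filter.Frequently.mono (Nat.frequently_atTop_iff_infinite.mpr hL)
        rintro t ⟨⟨htET, htT⟩, htL⟩
        have hjS : j ∉ S t := fun hjt => hj (hT t htT htET hjt)
        have hjtop : j ∉ topSet k (X t d) := fun h => hjS (htopsub t htET h)
        have hxtop : x ∈ topSet k (X t d) := by rw [htL]; exact hx
        exact le_of_lt (lt_of_not_mem_topSet hjtop hxtop)
      exact lt_of_lt_of_le hgt (freq_le (hlim d j) (hlim d x) hfr)
    have hsub : L ⊆ {x | γ < Xinf c x} := by
      intro x hx
      have h1 := hxle x hx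
      show γ < Xinf c x
      rw [hcSS x (hLSS hx)]
      rcases hd with rfl | rfl
      · exact h1
      · rw [heq x (hLSS hx)]; exact h1
    have := Set.ncard_le_ncard hsub (Set.toFinite _)
    omega
  -- assemble counting facts for both endpoints
  have hcountA : Set.ncard {x | γ < Xinf a x} < k := by
    refine lt_of_le_of_lt (Set.ncard_le_ncard ?_ (Set.toFinite _)) hcount
    intro x hx
    by_cases hxSS : x ∈ SS
    · show γ < Xinf c x; rw [hcSS x hxSS]; exact hx
    · exact absurd (hle x hxSS a (Or.inl rfl)) (not_le.mpr hx)
  have hcountB : Set.ncard {x | γ < Xinf b x} < k := by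
    refine lt_of_le_of_lt (Set.ncard_le_ncard ?_ (Set.toFinite _)) hcount
    intro x hx
    by_cases hxSS : x ∈ SS
    · show γ < Xinf c x; rw [hcSS x hxSS, heq x hxSS]; exact hx
    · exact absurd (hle x hxSS b (Or.inr rfl)) (not_le.mpr hx)
  have hcardSS : k ≤ SS.ncard := by
    obtain ⟨t₀, ht₀ET, ht₀T⟩ : ∃ t, t ∈ ET ∧ T ≤ t := by
      obtain ⟨t, ht⟩ := (hE.diff (Set.finite_Iio T)).nonempty
      exact ⟨t, ht.1, not_lt.mp (by simpa using ht.2)⟩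
    have h1 : topSet k (X t₀ (p t₀)) ⊆ SS := by
      intro x hx
      apply hT t₀ ht₀T ht₀ET
      rw [hS t₀]
      exact Set.mem_union_left _ hx
    exact le_trans (topSet_card hkn _) (Set.ncard_le_ncard h1 (Set.toFinite _))
  have hgeA : k ≤ Set.ncard {x | γ ≤ Xinf a x} := by
    refine le_trans hcardSS (Set.ncard_le_ncard ?_ (Set.toFinite _))
    intro x hx
    exact hγle x hx
  have hgeB : k ≤ Set.ncard {x | γ ≤ Xinf b x} := by
    refine le_trans hcardSS (Set.ncard_le_ncard ?_ (Set.toFinite _))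
    intro x hx
    show γ ≤ Xinf b x
    rw [← heq x hx]
    exact hγle x hx
  exact ⟨heq, fun j hj => ⟨hle j hj a (Or.inl rfl), hle j hj b (Or.inr rfl)⟩,
    ⟨hcountA, hgeA⟩, ⟨hcountB, hgeB⟩⟩

/-- In the generalized top-k selective gossiping trajectory with
connected connectivity graph, for any edge {i₁,i₂}, letting
α_{i₁i₂} = min_{j ∈ S^∞_{i₁i₂}} X_{i₁j}(∞), every agent's limiting opinion on
any candidate j ∉ S^∞_{i₁i₂} is at most α_{i₁i₂}. -/
theorem stmt10 (m n k : ℕ) (hm : 2 ≤ m) (hk : 1 ≤ k) (hkn : k ≤ n)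
    (p q : ℕ → Fin m) (hpq : ∀ t, p t ≠ q t)
    (X : ℕ → Fin m → Fin n → ℝ)
    (S : ℕ → Set (Fin n))
    (hS : ∀ t, S t = topSet k (X t (p t)) ∪ topSet k (X t (q t)))
    (hX1 : ∀ t (i : Fin m) (j : Fin n), (i = p t ∨ i = q t) → j ∈ S t →
      X (t + 1) i j = (X t (p t) j + X t (q t) j) / 2)
    (hX2 : ∀ t (i : Fin m) (j : Fin n), ¬((i = p t ∨ i = q t) ∧ j ∈ S t) →
      X (t + 1) i j = X t i j)
    (hconn : (SimpleGraph.fromRel (fun a b =>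
      {t : ℕ | (p t = a ∧ q t = b) ∨ (p t = b ∧ q t = a)}.Infinite)).Connected)
    (Xinf : Fin m → Fin n → ℝ)
    (hlim : ∀ (i : Fin m) (j : Fin n),
      Tendsto (fun t => X t i j) atTop (𝓝 (Xinf i j)))
    (i₁ i₂ : Fin m) (hne : i₁ ≠ i₂)
    (hE : {t : ℕ | (p t = i₁ ∧ q t = i₂) ∨ (p t = i₂ ∧ q t = i₁)}.Infinite)
    (Sinf : Set (Fin n))
    (hSinf : Sinf = {j : Fin n |
      {t : ℕ | ((p t = i₁ ∧ q t = i₂) ∨ (p t = i₂ ∧ q t = i₁)) ∧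
        j ∈ S t}.Infinite})
    (α : ℝ) (hα : α = sInf ((fun j => Xinf i₁ j) '' Sinf)) :
    ∀ j : Fin n, j ∉ Sinf → ∀ i : Fin m, Xinf i j ≤ α := by
  classical
  intro j hj i
  set G := SimpleGraph.fromRel (fun a b =>
    {t : ℕ | (p t = a ∧ q t = b) ∨ (p t = b ∧ q t = a)}.Infinite) with hG
  obtain ⟨heq0, hle0, ⟨hA0, hB0⟩⟩ :=
    edge_facts k hk hkn p q X S hS hX1 Xinf hlim i₁ i₂ hE Sinf hSinf α hα
  set Q : Fin m → Prop := fun i => Xinf i j ≤ α ∧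
    (Set.ncard {x | α < Xinf i x} < k ∧ k ≤ Set.ncard {x | α ≤ Xinf i x}) with hQ
  have hQ1 : Q i₁ := ⟨(hle0 j hj).1, hA0⟩
  have hstep : ∀ u v : Fin m, G.Adj u v → Q u → Q v := by
    intro u v hadj hQu
    rw [hG, SimpleGraph.fromRel_adj] at hadj
    obtain ⟨huv, hrel⟩ := hadj
    have hE' : {t : ℕ | (p t = u ∧ q t = v) ∨ (p t = v ∧ q t = u)}.Infinite := by
      rcases hrel with h | h
      · exact h
      · exact h.mono (fun t ht => Or.symm ht)
    obtain ⟨heq', hle', ⟨hAu, hAv⟩⟩ :=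
      edge_facts k hk hkn p q X S hS hX1 Xinf hlim u v hE' _ rfl _ rfl
    have hγα : sInf ((fun j => Xinf u j) '' {j : Fin n |
        {t : ℕ | ((p t = u ∧ q t = v) ∨ (p t = v ∧ q t = u)) ∧ j ∈ S t}.Infinite}) = α :=
      kth_unique hAu hQu.2
    refine ⟨?_, ?_⟩
    · by_cases hjuv : j ∈ {j : Fin n |
        {t : ℕ | ((p t = u ∧ q t = v) ∨ (p t = v ∧ q t = u)) ∧ j ∈ S t}.Infinite}
      · rw [← heq' j hjuv]; exact hQu.1
      · rw [← hγα]; exact (hle' j hjuv).2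
    · rw [← hγα]; exact hAv
  have hwalk : ∀ (u v : Fin m) (w : G.Walk u v), Q u → Q v := by
    intro u v w
    induction w with
    | nil => exact id
    | cons h w' ih => exact fun hq => ih (hstep _ _ h hq)
  obtain ⟨wlk⟩ := hconn.preconnected i₁ i
  exact (hwalk i₁ i wlk hQ1).1
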